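/- Let f ∈ ℂ[x,y,z] be a homogeneous polynomial of degree d > 1. Then the Jacobian ideal J_f coincides, as a ℂ-linear subspace of ℂ[x,y,z], with E_f + f·ℂ[x,y,z]; that is, every element of J_f can be written as f_x(∂R/∂y − ∂Q/∂z) + f_y(∂P/∂z − ∂R/∂x) + f_z(∂Q/∂x − ∂P/∂y) + f·h for some P, Q, R, h ∈ ℂ[x,y,z], and conversely every such element lies in J_f. -/
import Mathlib

open MvPolynomial

private lemma X_mul_pderiv_monomial' (i : Fin 3) (s : Fin 3 →₀ ℕ) (c : ℂ) :
    (X i : MvPolynomial (Fin 3) ℂ) * pderiv i (monomial s c) = C ((s i : ℂ)) * monomial s c := by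
  rw [pderiv_monomial, C_mul_monomial]
  rcases Nat.eq_zero_or_pos (s i) with h | h
  · simp [h]
  · have h1 : Finsupp.single i 1 ≤ s := by
      rwa [Finsupp.single_le_iff]
    rw [X, monomial_mul, one_mul, add_tsub_cancel_of_le h1, mul_comm]

private lemma deg_three (s : Fin 3 →₀ ℕ) : Finsupp.weight (1 : Fin 3 → ℕ) s = s 0 + s 1 + s 2 := by
  rw [Finsupp.weight_apply, Finsupp.sum_fintype _ _ (by simp), Fin.sum_univ_three]
  simp

private lemma euler3 (p : MvPolynomial (Fin 3) ℂ) (n : ℕ) (hp : p.IsHomogeneous n) :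
    X 0 * pderiv 0 p + X 1 * pderiv 1 p + X 2 * pderiv 2 p = C (n : ℂ) * p := by
  conv_lhs => rw [p.as_sum]
  conv_rhs => rw [p.as_sum]
  rw [map_sum (pderiv 0), map_sum (pderiv 1), map_sum (pderiv 2)]
  simp only [Finset.mul_sum]
  rw [← Finset.sum_add_distrib, ← Finset.sum_add_distrib]
  apply Finset.sum_congr rfl
  intro s hs
  rw [X_mul_pderiv_monomial', X_mul_pderiv_monomial', X_mul_pderiv_monomial',
    ← add_mul, ← add_mul, ← C_add, ← C_add]
  have hdeg : s 0 + s 1 + s 2 = n := by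
    rw [← deg_three s]; exact hp (mem_support_iff.mp hs)
  rw [← hdeg]
  push_cast
  ring_nf

/-- The subspace `E_f + f·S` as a `ℂ`-submodule. -/
private noncomputable def Efull (f : MvPolynomial (Fin 3) ℂ) :
    Submodule ℂ (MvPolynomial (Fin 3) ℂ) where
  carrier := {w | ∃ P Q R h : MvPolynomial (Fin 3) ℂ,
        w = (pderiv 0 f * (pderiv 1 R - pderiv 2 Q) +
             pderiv 1 f * (pderiv 2 P - pderiv 0 R) +
             pderiv 2 f * (pderiv 0 Q - pderiv 1 P)) + f * h}
  zero_mem' := ⟨0, 0, 0, 0, by simp⟩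
  add_mem' := by
    rintro w1 w2 ⟨P1, Q1, R1, h1, rfl⟩ ⟨P2, Q2, R2, h2, rfl⟩
    exact ⟨P1 + P2, Q1 + Q2, R1 + R2, h1 + h2, by simp only [map_add]; ring⟩
  smul_mem' := by
    rintro c w ⟨P, Q, R, h, rfl⟩
    refine ⟨C c * P, C c * Q, C c * R, C c * h, ?_⟩
    simp only [pderiv_C_mul, smul_eq_C_mul]
    ring

private lemma mem_Efull_iff (f w : MvPolynomial (Fin 3) ℂ) :
    w ∈ Efull f ↔ ∃ P Q R h : MvPolynomial (Fin 3) ℂ,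
        w = (pderiv 0 f * (pderiv 1 R - pderiv 2 Q) +
             pderiv 1 f * (pderiv 2 P - pderiv 0 R) +
             pderiv 2 f * (pderiv 0 Q - pderiv 1 P)) + f * h := Iff.rfl

private lemma smul_trick {f : MvPolynomial (Fin 3) ℂ} (u v : MvPolynomial (Fin 3) ℂ) (m : ℂ)
    (hm : m ≠ 0) (hv : C m * u = v) (hvmem : v ∈ Efull f) : u ∈ Efull f := by
  have : u = m⁻¹ • v := by
    rw [← hv, smul_eq_C_mul, ← mul_assoc, ← C_mul, inv_mul_cancel₀ hm, C_1, one_mul]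
  rw [this]
  exact Submodule.smul_mem _ _ hvmem

private lemma hmono (s : Fin 3 →₀ ℕ) : ((s 0 + s 1 + s 2 : ℕ) : ℂ) + 2 ≠ 0 := by
  have : ((s 0 + s 1 + s 2 : ℕ) : ℂ) + 2 = ((s 0 + s 1 + s 2 + 2 : ℕ) : ℂ) := by push_cast; ring
  rw [this]
  exact Nat.cast_ne_zero.mpr (by omega)

private lemma key0 (f : MvPolynomial (Fin 3) ℂ) (d : ℕ) (hf : f.IsHomogeneous d)
    (s : Fin 3 →₀ ℕ) (cc : ℂ) : (monomial s cc) * pderiv 0 f ∈ Efull f := by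
  have hEf := euler3 f d hf
  set a := monomial s cc with ha
  have e0 := X_mul_pderiv_monomial' 0 s cc
  have e1 := X_mul_pderiv_monomial' 1 s cc
  have e2 := X_mul_pderiv_monomial' 2 s cc
  refine smul_trick _ _ _ (hmono s) rfl ?_
  refine ⟨0, -(X 2 * a), X 1 * a, C ((d:ℂ)) * pderiv 0 a, ?_⟩
  simp only [map_neg, map_zero, pderiv_mul, pderiv_X_self,
    pderiv_X_of_ne (show (1:Fin 3) ≠ 0 by decide),
    pderiv_X_of_ne (show (2:Fin 3) ≠ 0 by decide),
    pderiv_X_of_ne (show (0:Fin 3) ≠ 1 by decide),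
    pderiv_X_of_ne (show (2:Fin 3) ≠ 1 by decide),
    pderiv_X_of_ne (show (0:Fin 3) ≠ 2 by decide),
    pderiv_X_of_ne (show (1:Fin 3) ≠ 2 by decide)]
  push_cast
  simp only [map_add, map_ofNat]
  linear_combination (pderiv 0 a) * hEf - (pderiv 0 f) * (e0 + e1 + e2)

private lemma key1 (f : MvPolynomial (Fin 3) ℂ) (d : ℕ) (hf : f.IsHomogeneous d)
    (s : Fin 3 →₀ ℕ) (cc : ℂ) : (monomial s cc) * pderiv 1 f ∈ Efull f := by
  have hEf := euler3 f d hf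
  set a := monomial s cc with ha
  have e0 := X_mul_pderiv_monomial' 0 s cc
  have e1 := X_mul_pderiv_monomial' 1 s cc
  have e2 := X_mul_pderiv_monomial' 2 s cc
  refine smul_trick _ _ _ (hmono s) rfl ?_
  refine ⟨X 2 * a, 0, -(X 0 * a), C ((d:ℂ)) * pderiv 1 a, ?_⟩
  simp only [map_neg, map_zero, pderiv_mul, pderiv_X_self,
    pderiv_X_of_ne (show (1:Fin 3) ≠ 0 by decide),
    pderiv_X_of_ne (show (2:Fin 3) ≠ 0 by decide),
    pderiv_X_of_ne (show (0:Fin 3) ≠ 1 by decide),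
    pderiv_X_of_ne (show (2:Fin 3) ≠ 1 by decide),
    pderiv_X_of_ne (show (0:Fin 3) ≠ 2 by decide),
    pderiv_X_of_ne (show (1:Fin 3) ≠ 2 by decide)]
  push_cast
  simp only [map_add, map_ofNat]
  linear_combination (pderiv 1 a) * hEf - (pderiv 1 f) * (e0 + e1 + e2)

private lemma key2 (f : MvPolynomial (Fin 3) ℂ) (d : ℕ) (hf : f.IsHomogeneous d)
    (s : Fin 3 →₀ ℕ) (cc : ℂ) : (monomial s cc) * pderiv 2 f ∈ Efull f := by
  have hEf := euler3 f d hf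
  set a := monomial s cc with ha
  have e0 := X_mul_pderiv_monomial' 0 s cc
  have e1 := X_mul_pderiv_monomial' 1 s cc
  have e2 := X_mul_pderiv_monomial' 2 s cc
  refine smul_trick _ _ _ (hmono s) rfl ?_
  refine ⟨-(X 1 * a), X 0 * a, 0, C ((d:ℂ)) * pderiv 2 a, ?_⟩
  simp only [map_neg, map_zero, pderiv_mul, pderiv_X_self,
    pderiv_X_of_ne (show (1:Fin 3) ≠ 0 by decide),
    pderiv_X_of_ne (show (2:Fin 3) ≠ 0 by decide),
    pderiv_X_of_ne (show (0:Fin 3) ≠ 1 by decide),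
    pderiv_X_of_ne (show (2:Fin 3) ≠ 1 by decide),
    pderiv_X_of_ne (show (0:Fin 3) ≠ 2 by decide),
    pderiv_X_of_ne (show (1:Fin 3) ≠ 2 by decide)]
  push_cast
  simp only [map_add, map_ofNat]
  linear_combination (pderiv 2 a) * hEf - (pderiv 2 f) * (e0 + e1 + e2)

/-- For `f ∈ ℂ[x,y,z]` homogeneous of degree `d > 1`, the Jacobian ideal
`J_f = (f_x, f_y, f_z)` coincides with `E_f + f·ℂ[x,y,z]`, where
`E_f = {f_x(R_y − Q_z) + f_y(P_z − R_x) + f_z(Q_x − P_y) : P, Q, R}`. -/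
theorem statement1 (f : MvPolynomial (Fin 3) ℂ) (d : ℕ) (hd : 1 < d)
    (hf : f.IsHomogeneous d) (w : MvPolynomial (Fin 3) ℂ) :
    w ∈ Ideal.span ({pderiv 0 f, pderiv 1 f, pderiv 2 f} : Set (MvPolynomial (Fin 3) ℂ)) ↔
      ∃ P Q R h : MvPolynomial (Fin 3) ℂ,
        w = (pderiv 0 f * (pderiv 1 R - pderiv 2 Q) +
             pderiv 1 f * (pderiv 2 P - pderiv 0 R) +
             pderiv 2 f * (pderiv 0 Q - pderiv 1 P)) + f * h := by
  have hEf := euler3 f d hf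
  have hg0 : pderiv 0 f ∈ Ideal.span ({pderiv 0 f, pderiv 1 f, pderiv 2 f} :
      Set (MvPolynomial (Fin 3) ℂ)) := Ideal.subset_span (by simp)
  have hg1 : pderiv 1 f ∈ Ideal.span ({pderiv 0 f, pderiv 1 f, pderiv 2 f} :
      Set (MvPolynomial (Fin 3) ℂ)) := Ideal.subset_span (by simp)
  have hg2 : pderiv 2 f ∈ Ideal.span ({pderiv 0 f, pderiv 1 f, pderiv 2 f} :
      Set (MvPolynomial (Fin 3) ℂ)) := Ideal.subset_span (by simp)
  have hdC : ((d : ℂ)) ≠ 0 := by exact_mod_cast (by omega : d ≠ 0)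
  have hfmem : f ∈ Ideal.span ({pderiv 0 f, pderiv 1 f, pderiv 2 f} :
      Set (MvPolynomial (Fin 3) ℂ)) := by
    have h2 : C (d : ℂ) * f ∈ Ideal.span ({pderiv 0 f, pderiv 1 f, pderiv 2 f} :
        Set (MvPolynomial (Fin 3) ℂ)) := by
      rw [← hEf]
      exact Ideal.add_mem _ (Ideal.add_mem _ (Ideal.mul_mem_left _ _ hg0)
        (Ideal.mul_mem_left _ _ hg1)) (Ideal.mul_mem_left _ _ hg2)
    have h3 := Ideal.mul_mem_left _ (C ((d : ℂ))⁻¹) h2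
    rwa [← mul_assoc, ← C_mul, inv_mul_cancel₀ hdC, C_1, one_mul] at h3
  constructor
  · intro hw
    rw [show ({pderiv 0 f, pderiv 1 f, pderiv 2 f} : Set (MvPolynomial (Fin 3) ℂ)) =
        insert (pderiv 0 f) {pderiv 1 f, pderiv 2 f} from rfl,
      Ideal.mem_span_insert] at hw
    obtain ⟨a, z, hz, rfl⟩ := hw
    rw [show ({pderiv 1 f, pderiv 2 f} : Set (MvPolynomial (Fin 3) ℂ)) =
        insert (pderiv 1 f) {pderiv 2 f} from rfl,
      Ideal.mem_span_insert] at hz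
    obtain ⟨b, z2, hz2, rfl⟩ := hz
    rw [Ideal.mem_span_singleton] at hz2
    obtain ⟨c, rfl⟩ := hz2
    rw [← mem_Efull_iff]
    have mul_mem : ∀ (p : MvPolynomial (Fin 3) ℂ) (i : Fin 3)
        (hkey : ∀ (s : Fin 3 →₀ ℕ) (cc : ℂ), (monomial s cc) * pderiv i f ∈ Efull f),
        p * pderiv i f ∈ Efull f := by
      intro p i hkey
      rw [← p.support_sum_monomial_coeff, Finset.sum_mul]
      exact Submodule.sum_mem _ (fun s _ => hkey s _)
    refine Submodule.add_mem _ ?_ (Submodule.add_mem _ ?_ ?_)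
    · exact mul_mem a 0 (key0 f d hf)
    · exact mul_mem b 1 (key1 f d hf)
    · first
        | exact mul_mem c 2 (key2 f d hf)
        | (rw [mul_comm]; exact mul_mem c 2 (key2 f d hf))
  · rintro ⟨P, Q, R, h, rfl⟩
    refine Ideal.add_mem _ (Ideal.add_mem _ (Ideal.add_mem _ ?_ ?_) ?_) ?_
    · exact Ideal.mul_mem_right _ _ hg0
    · exact Ideal.mul_mem_right _ _ hg1
    · exact Ideal.mul_mem_right _ _ hg2
    · exact Ideal.mul_mem_right _ _ hfmem
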